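/- Let I be a star in G with center v_0 and leaves v_1,…,v_d (d ≥ 1), ordered by nonincreasing cost of c(v_0 v_i), that covers U ∩ {v_0,…,v_d}, and let π(v) = max{p_I(v), ℓ_v}. Then there exists a U∩{v_0,…,v_d}-cover I' in the auxiliary graph G' with c'(I') ≤ (3/2)·∑_{i=0}^{d} π(v_i). -/

import Mathlib

open Finset

variable {V : Type*} [Fintype V] [DecidableEq V]

/-- The set of edges of `J` incident to the node `v`. -/
def inc (J : Finset (Sym2 V)) (v : V) : Finset (Sym2 V) := J.filter (fun e => v ∈ e)

/-- The power of the node `v` w.r.t. the edge set `J`: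
the maximum cost of an edge of `J` incident to `v` (`0` if `v` is isolated). -/
def pw (c : Sym2 V → NNReal) (J : Finset (Sym2 V)) (v : V) : NNReal := (inc J v).sup c

/-- The degree of the node `v` in the graph `(V, J)`. -/
def deg (J : Finset (Sym2 V)) (v : V) : ℕ := (inc J v).card
set_option linter.unusedSectionVars false

lemma pw_singleton (c : Sym2 V → NNReal) (e : Sym2 V) (x : V) :
    pw c {e} x = if x ∈ e then c e else 0 := by
  unfold pw inc
  rw [Finset.filter_singleton]
  split <;> simp

lemma pw_pair (c : Sym2 V → NNReal) (e f : Sym2 V) (x : V) :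
    pw c {e, f} x = (if x ∈ e then c e else 0) ⊔ (if x ∈ f then c f else 0) := by
  unfold pw inc
  rw [Finset.filter_insert, Finset.filter_singleton]
  split <;> split <;> simp [*]

lemma Dsum_eq (ℓ : V → ℝ) (hℓ : ∀ x, 0 ≤ ℓ x) (c : Sym2 V → NNReal) (J : Finset (Sym2 V))
    (S : Finset V) (h : ∀ x, x ∉ S → pw c J x = 0) :
    ∑ x, max ((pw c J x : ℝ) - ℓ x) 0 = ∑ x ∈ S, max ((pw c J x : ℝ) - ℓ x) 0 := by
  refine (Finset.sum_subset (Finset.subset_univ S) fun x _ hx => ?_).symm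
  rw [h x hx]
  simp [hℓ x, max_eq_right]

lemma max_sub_zero (a b : ℝ) : max (a - b) 0 = max a b - b := by
  rcases le_total a b with h | h <;>
    simp [max_eq_right, max_eq_left, sub_nonpos.mpr h, sub_nonneg.mpr h, h] <;> linarith

lemma D_single (ℓ : V → ℝ) (hℓ : ∀ x, 0 ≤ ℓ x) (c : Sym2 V → NNReal) (u w : V) (huw : u ≠ w) :
    ∑ x, max ((pw c {s(u, w)} x : ℝ) - ℓ x) 0
      = max ((c s(u, w) : ℝ) - ℓ u) 0 + max ((c s(u, w) : ℝ) - ℓ w) 0 := by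
  rw [Dsum_eq ℓ hℓ c _ {u, w} (fun x hx => by
    rw [pw_singleton]
    rw [if_neg]
    simp only [Finset.mem_insert, Finset.mem_singleton, not_or] at hx
    simp [Sym2.mem_iff, hx.1, hx.2])]
  rw [Finset.sum_pair huw]
  rw [pw_singleton, pw_singleton, if_pos (by simp), if_pos (by simp)]

lemma D_pair (ℓ : V → ℝ) (hℓ : ∀ x, 0 ≤ ℓ x) (c : Sym2 V → NNReal) (p q r : V)
    (hpq : p ≠ q) (hqr : q ≠ r) (hpr : p ≠ r) (hc : c s(q, r) ≤ c s(p, q)) :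
    ∑ x, max ((pw c {s(p, q), s(q, r)} x : ℝ) - ℓ x) 0
      ≤ max ((c s(p, q) : ℝ) - ℓ p) 0 + (c s(p, q) : ℝ) + max ((c s(q, r) : ℝ) - ℓ r) 0 := by
  rw [Dsum_eq ℓ hℓ c _ {p, q, r} (fun x hx => by
    simp only [Finset.mem_insert, Finset.mem_singleton, not_or] at hx
    rw [pw_pair, if_neg (by simp [Sym2.mem_iff, hx.1, hx.2.1]),
      if_neg (by simp [Sym2.mem_iff, hx.2.1, hx.2.2])]
    simp)]
  rw [Finset.sum_insert (by simp [hpq, hpr]), Finset.sum_pair hqr]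
  rw [pw_pair, pw_pair, pw_pair,
    if_pos (by simp), if_neg (by simp [Sym2.mem_iff, hpq, hpr]),
    if_pos (by simp), if_pos (by simp),
    if_neg (by simp [Sym2.mem_iff, hpr.symm, hqr.symm]), if_pos (by simp)]
  have h1 : ((c s(p,q) ⊔ 0 : NNReal) : ℝ) = (c s(p,q) : ℝ) := by simp
  have h2 : ((c s(p,q) ⊔ c s(q,r) : NNReal) : ℝ) = (c s(p,q) : ℝ) := by
    simp [sup_eq_left.mpr hc]
  have h3 : (((0 : NNReal) ⊔ c s(q,r) : NNReal) : ℝ) = (c s(q,r) : ℝ) := by simp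
  rw [h1, h2, h3]
  have : max ((c s(p,q) : ℝ) - ℓ q) 0 ≤ (c s(p,q) : ℝ) := by
    apply max_le (by linarith [hℓ q]) (c s(p,q)).coe_nonneg
  linarith

lemma Icc_bot_split (f : ℕ → ℝ) (a b : ℕ) (h : a ≤ b) :
    ∑ j ∈ Finset.Icc a b, f j = f a + ∑ j ∈ Finset.Icc (a+1) b, f j := by
  have : Finset.Icc a b = insert a (Finset.Icc (a+1) b) := by
    ext x; simp; omega
  rw [this, Finset.sum_insert (by simp)]

lemma arith_aux (P C : ℕ → ℝ) (s d : ℕ) (hP : ∀ j, 0 ≤ P j)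
    (hCP : ∀ j, s ≤ j → j ≤ d → C j ≤ P j)
    (hCm : ∀ i j, s ≤ i → i ≤ j → j ≤ d → C j ≤ C i) :
    ∀ k', s + 2*k' ≤ d →
    ∑ i ∈ Finset.range (k'+1),
        (P (s+2*i) + (if s+2*i+1 ≤ d then P (s+2*i+1) else 0) + C (s+2*i))
      ≤ C s + ∑ j ∈ Finset.Icc s (min (s+2*k'+1) d), P j
          + (1/2) * ∑ j ∈ Finset.Icc (s+1) (s+2*k'), P j := by
  intro k'
  induction k' with
  | zero =>
    intro hsd
    simp only [Nat.mul_zero, Nat.add_zero] at *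
    rw [Finset.sum_range_one]
    rw [show Finset.Icc (s+1) s = ∅ by simp]
    simp only [Finset.sum_empty, mul_zero, add_zero]
    by_cases h1 : s + 1 ≤ d
    · rw [min_eq_left h1, Icc_bot_split P s (s+1) (by omega), if_pos h1]
      rw [show Finset.Icc (s+1) (s+1) = {s+1} by simp]
      rw [Finset.sum_singleton]
      linarith
    · rw [min_eq_right (by omega), if_neg h1]
      have hds : Finset.Icc s d = {s} := by ext x; simp; omega
      rw [hds, Finset.sum_singleton]
      linarith
  | succ m ih =>
    intro hsd
    have hm : s + 2*m ≤ d := by omega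
    have ih' := ih hm
    rw [Finset.sum_range_succ]
    have hmin : min (s+2*m+1) d = s+2*m+1 := min_eq_left (by omega)
    rw [hmin] at ih'
    have hsplit2 : ∑ j ∈ Finset.Icc (s+1) (s+2*(m+1)), P j
        = ∑ j ∈ Finset.Icc (s+1) (s+2*m), P j + P (s+2*m+1) + P (s+2*m+2) := by
      rw [show s+2*(m+1) = (s+2*m+1)+1 by ring, Finset.sum_Icc_succ_top (by omega),
        Finset.sum_Icc_succ_top (by omega), show s+2*m+1+1 = s+2*m+2 by ring]
    have hCkey : C (s+2*(m+1)) ≤ (1/2) * (P (s+2*m+1) + P (s+2*m+2)) := by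
      have h1 : C (s+2*(m+1)) ≤ C (s+2*m+1) := hCm _ _ (by omega) (by omega) (by omega)
      have h2 : C (s+2*m+1) ≤ P (s+2*m+1) := hCP _ (by omega) (by omega)
      have h3 : C (s+2*(m+1)) ≤ P (s+2*(m+1)) := hCP _ (by omega) (by omega)
      have e : s+2*(m+1) = s+2*m+2 := by ring
      rw [e] at h1 h3 ⊢
      linarith
    by_cases h1 : s+2*(m+1)+1 ≤ d
    · rw [min_eq_left (by omega)]
      have hsplit1 : ∑ j ∈ Finset.Icc s (s+2*(m+1)+1), P j
          = ∑ j ∈ Finset.Icc s (s+2*m+1), P j + P (s+2*m+2) + P (s+2*m+3) := by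
        rw [show s+2*(m+1)+1 = (s+2*m+2)+1 by ring, Finset.sum_Icc_succ_top (by omega),
          show s+2*m+2 = (s+2*m+1)+1 by ring, Finset.sum_Icc_succ_top (by omega),
          show s+2*m+1+1 = s+2*m+2 by ring, show s+2*m+2+1 = s+2*m+3 by ring]
      rw [if_pos h1, hsplit1, hsplit2]
      rw [show s+2*(m+1) = s+2*m+2 by ring] at hCkey
      rw [show s+2*(m+1)+1 = s+2*m+3 by ring, show s+2*(m+1) = s+2*m+2 by ring]
      linarith
    · rw [min_eq_right (by omega)]
      have hd2 : d = s+2*(m+1) := by omega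
      have hsplit1 : ∑ j ∈ Finset.Icc s d, P j
          = ∑ j ∈ Finset.Icc s (s+2*m+1), P j + P (s+2*m+2) := by
        rw [hd2, show s+2*(m+1) = (s+2*m+1)+1 by ring, Finset.sum_Icc_succ_top (by omega)]
      rw [if_neg h1, hsplit1, hsplit2]
      rw [show s+2*(m+1) = s+2*m+2 by ring] at hCkey ⊢
      linarith

def peF (v : ℕ → V) (st d : ℕ) (i : ℕ) : Finset V × Finset (Sym2 V) :=
  ({v (st+2*i), v (min (st+2*i+1) d)},
   {s(v (st+2*i), v 0), s(v 0, v (min (st+2*i+1) d))})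

/-- The star lemma (Lemma 8): for a star `I` with center `v 0` and leaves `v 1, …, v d`
(ordered by nonincreasing cost, all leaves in `U`) and `π(x) = max{p_I(x), ℓ x}`, there is
a cover `I'` of `U ∩ {v 0, …, v d}` in the auxiliary graph `G'` — consisting of type 1
(loop at a node with a cheapest incident edge), type 2 and type 3 edges, each represented
by its endpoint set together with its underlying edge set, and of cost
`∑_{x∈ends} ℓ x + D(underlying edges)` — with `c'(I') ≤ (3/2)·∑_{i=0}^d π(v i)`. -/
theorem stmt17 (E : Finset (Sym2 V)) (c : Sym2 V → NNReal) (U : Finset V) (ℓ : V → ℝ)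
    (hℓ : ∀ x, 0 ≤ ℓ x) (hℓ0 : ∀ x, x ∉ U → ℓ x = 0)
    (hℓmin : ∀ u ∈ U, ∃ e ∈ E, u ∈ e ∧ (c e : ℝ) ≤ ℓ u)
    (hsimple : ∀ e ∈ E, ¬ e.IsDiag)
    (d : ℕ) (hd : 1 ≤ d) (v : ℕ → V)
    (hinj : ∀ i j, i ≤ d → j ≤ d → v i = v j → i = j)
    (hE : ∀ i, 1 ≤ i → i ≤ d → s(v 0, v i) ∈ E)
    (hleaves : ∀ i, 1 ≤ i → i ≤ d → v i ∈ U)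
    (hmono : ∀ i j, 1 ≤ i → i ≤ j → j ≤ d → c s(v 0, v j) ≤ c s(v 0, v i))
    (I : Finset (Sym2 V)) (hI : I = (Finset.Icc 1 d).image (fun i => s(v 0, v i)))
    (π : V → ℝ) (hπ : ∀ x, π x = max ((pw c I x : ℝ)) (ℓ x)) :
    ∃ I'' : Finset (Finset V × Finset (Sym2 V)),
      (∀ p ∈ I'',
        (∃ u ∈ U, ∃ f ∈ E, p.1 = {u} ∧ p.2 = {f} ∧ u ∈ f ∧
          ∀ g ∈ E, u ∈ g → c f ≤ c g) ∨
        (∃ u ∈ U, ∃ z ∈ U, u ≠ z ∧ s(u, z) ∈ E ∧ p.1 = {u, z} ∧ p.2 = {s(u, z)}) ∨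
        (∃ u ∈ U, ∃ z ∈ U, ∃ x : V, s(u, x) ∈ E ∧ s(x, z) ∈ E ∧
          c s(x, z) ≤ c s(u, x) ∧ p.1 = {u, z} ∧ p.2 = {s(u, x), s(x, z)})) ∧
      (∀ x ∈ U, (∃ i ≤ d, x = v i) → ∃ p ∈ I'', x ∈ p.1) ∧
      ∑ p ∈ I'', ((∑ x ∈ p.1, ℓ x) + ∑ x, max ((pw c p.2 x : ℝ) - ℓ x) 0) ≤
        (3 / 2) * ∑ i ∈ Finset.range (d + 1), π (v i) := by
  classical
  have hvne : ∀ i j, i ≤ d → j ≤ d → i ≠ j → v i ≠ v j :=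
    fun i j hi hj hij h => hij (hinj i j hi hj h)
  -- pw facts on I
  have hincI : ∀ j, 1 ≤ j → j ≤ d → inc I (v j) = {s(v 0, v j)} := by
    intro j h1 h2
    ext e
    simp only [inc, hI, Finset.mem_filter, Finset.mem_image, Finset.mem_Icc,
      Finset.mem_singleton]
    constructor
    · rintro ⟨⟨i, ⟨hi1, hi2⟩, rfl⟩, hmem⟩
      rw [Sym2.mem_iff] at hmem
      rcases hmem with h | h
      · exact absurd (hinj j 0 h2 (Nat.zero_le d) h) (by omega)
      · rw [hinj j i h2 hi2 h]
    · rintro rfl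
      exact ⟨⟨j, ⟨h1, h2⟩, rfl⟩, Sym2.mem_mk_right _ _⟩
  have hpwI : ∀ j, 1 ≤ j → j ≤ d → (pw c I (v j) : ℝ) = (c s(v 0, v j) : ℝ) := by
    intro j h1 h2
    rw [pw, hincI j h1 h2, Finset.sup_singleton]
  have hpwI0 : (pw c I (v 0) : ℝ) = (c s(v 0, v 1) : ℝ) := by
    have h1 : inc I (v 0) = I := by
      rw [inc, Finset.filter_true_of_mem]
      intro e he
      rw [hI, Finset.mem_image] at he
      obtain ⟨i, _, rfl⟩ := he
      exact Sym2.mem_mk_left _ _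
    rw [pw, h1]
    congr 1
    apply le_antisymm
    · apply Finset.sup_le
      intro e he
      rw [hI, Finset.mem_image] at he
      obtain ⟨i, hi, rfl⟩ := he
      rw [Finset.mem_Icc] at hi
      exact hmono 1 i le_rfl hi.1 hi.2
    · exact Finset.le_sup (by rw [hI]; exact Finset.mem_image_of_mem _ (by simp [hd]))
  have hπj : ∀ j, 1 ≤ j → j ≤ d → π (v j) = max ((c s(v 0, v j) : ℝ)) (ℓ (v j)) := by
    intro j h1 h2; rw [hπ, hpwI j h1 h2]
  have hπ0 : π (v 0) = max ((c s(v 0, v 1) : ℝ)) (ℓ (v 0)) := by rw [hπ, hpwI0]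
  have hCnn : ∀ j, (0:ℝ) ≤ (c s(v 0, v j) : ℝ) := fun j => (c _).coe_nonneg
  have hPnn : ∀ x, 0 ≤ π x := fun x => by
    rw [hπ]; exact le_trans (hℓ x) (le_max_right _ _)
  have hCPj : ∀ j, 1 ≤ j → j ≤ d → (c s(v 0, v j) : ℝ) ≤ π (v j) := fun j h1 h2 => by
    rw [hπj j h1 h2]; exact le_max_left _ _
  have hCP0 : (c s(v 0, v 1) : ℝ) ≤ π (v 0) := by rw [hπ0]; exact le_max_left _ _
  have hCm : ∀ i j, 1 ≤ i → i ≤ j → j ≤ d →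
      (c s(v 0, v j) : ℝ) ≤ (c s(v 0, v i) : ℝ) := fun i j h1 h2 h3 =>
    NNReal.coe_le_coe.mpr (hmono i j h1 h2 h3)
  set st : ℕ := if v 0 ∈ U then 2 else 1 with hst
  have hst1 : 1 ≤ st := by rw [hst]; split <;> omega
  have hst2 : st ≤ 2 := by rw [hst]; split <;> omega
  set k : ℕ := if st ≤ d then (d - st)/2 + 1 else 0 with hk
  have hik : ∀ i, i < k → st + 2*i ≤ d := by
    intro i hi
    rw [hk] at hi
    split at hi <;> omega
  -- the head element and the cover
  set hed : Finset (Finset V × Finset (Sym2 V)) :=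
    if v 0 ∈ U then {({v 0, v 1}, ({s(v 0, v 1)} : Finset (Sym2 V)))} else ∅ with hhed
  refine ⟨hed ∪ (Finset.range k).image (peF v st d), ?_, ?_, ?_⟩
  · -- goal 1 : types
    intro p hp
    rcases Finset.mem_union.mp hp with hp | hp
    · -- head : type 2
      rw [hhed] at hp
      have hvU : v 0 ∈ U := by by_contra h; rw [if_neg h] at hp; exact absurd hp (by simp)
      rw [if_pos hvU, Finset.mem_singleton] at hp
      subst hp
      right; left
      exact ⟨v 0, hvU, v 1, hleaves 1 le_rfl hd,
        hvne 0 1 (by omega) hd (by omega), hE 1 le_rfl hd, rfl, rfl⟩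
    · rw [Finset.mem_image] at hp
      obtain ⟨i, hi, rfl⟩ := hp
      rw [Finset.mem_range] at hi
      have ha := hik i hi
      have hb1 : 1 ≤ min (st+2*i+1) d := by omega
      have hb2 : min (st+2*i+1) d ≤ d := min_le_right _ _
      right; right
      refine ⟨v (st+2*i), hleaves _ (by omega) ha, v (min (st+2*i+1) d), hleaves _ hb1 hb2,
        v 0, ?_, hE _ hb1 hb2, ?_, rfl, rfl⟩
      · rw [show s(v (st+2*i), v 0) = s(v 0, v (st+2*i)) from Sym2.eq_swap]
        exact hE _ (by omega) ha
      · rw [show s(v (st+2*i), v 0) = s(v 0, v (st+2*i)) from Sym2.eq_swap]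
        exact hmono _ _ (by omega) (by omega) hb2
  · -- goal 2 : coverage
    rintro x hxU ⟨i, hid, rfl⟩
    by_cases hi0 : i = 0
    · subst hi0
      refine ⟨({v 0, v 1}, ({s(v 0, v 1)} : Finset (Sym2 V))), ?_, Finset.mem_insert_self _ _⟩
      apply Finset.mem_union_left
      rw [hhed, if_pos hxU]
      exact Finset.mem_singleton_self _
    · by_cases his : i < st
      · -- i = 1 and st = 2, so v 0 ∈ U
        have hvU : v 0 ∈ U := by
          by_contra h
          rw [hst, if_neg h] at his
          omega
        have hi1 : i = 1 := by rw [hst, if_pos hvU] at his; omega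
        subst hi1
        refine ⟨({v 0, v 1}, ({s(v 0, v 1)} : Finset (Sym2 V))), ?_, ?_⟩
        · apply Finset.mem_union_left
          rw [hhed, if_pos hvU]
          exact Finset.mem_singleton_self _
        · exact Finset.mem_insert_of_mem (Finset.mem_singleton_self _)
      · push_neg at his
        have hjk : (i - st)/2 < k := by rw [hk, if_pos (le_trans his hid)]; omega
        refine ⟨peF v st d ((i - st)/2),
          Finset.mem_union_right _
            (Finset.mem_image_of_mem _ (Finset.mem_range.mpr hjk)), ?_⟩
        have hcase : st + 2*((i - st)/2) = i ∨ min (st + 2*((i - st)/2) + 1) d = i := by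
          omega
        show v i ∈ ({v (st + 2*((i-st)/2)), v (min (st + 2*((i-st)/2)+1) d)} : Finset V)
        refine Finset.mem_insert.mpr ?_
        rcases hcase with h | h
        · exact Or.inl (congrArg v h.symm)
        · exact Or.inr (Finset.mem_singleton.mpr (congrArg v h.symm))
  · -- goal 3 : cost
    have hheadcost : (∑ x ∈ ({v 0, v 1} : Finset V), ℓ x)
        + ∑ x, max ((pw c ({s(v 0, v 1)} : Finset (Sym2 V)) x : ℝ) - ℓ x) 0
        ≤ π (v 0) + π (v 1) := by
      have hne : v 0 ≠ v 1 := hvne 0 1 (by omega) hd (by omega)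
      rw [Finset.sum_pair hne, D_single ℓ hℓ c _ _ hne, max_sub_zero, max_sub_zero,
        hπ0, hπj 1 le_rfl hd]
      linarith
    have hpecost : ∀ i, i < k →
        (∑ x ∈ (peF v st d i).1, ℓ x)
          + ∑ x, max ((pw c (peF v st d i).2 x : ℝ) - ℓ x) 0
        ≤ π (v (st+2*i)) + (if st+2*i+1 ≤ d then π (v (st+2*i+1)) else 0)
            + (c s(v 0, v (st+2*i)) : ℝ) := by
      intro i hi
      have ha := hik i hi
      have hsw : s(v (st+2*i), v 0) = s(v 0, v (st+2*i)) := Sym2.eq_swap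
      show (∑ x ∈ ({v (st+2*i), v (min (st+2*i+1) d)} : Finset V), ℓ x)
          + ∑ x, max ((pw c ({s(v (st+2*i), v 0), s(v 0, v (min (st+2*i+1) d))} :
              Finset (Sym2 V)) x : ℝ) - ℓ x) 0 ≤ _
      by_cases hgen : st+2*i+1 ≤ d
      · have hbbi : min (st+2*i+1) d = st+2*i+1 := min_eq_left hgen
        have hne1 : v (st+2*i) ≠ v (st+2*i+1) := hvne _ _ ha hgen (by omega)
        have hne0a : v (st+2*i) ≠ v 0 := hvne _ _ ha (by omega) (by omega)
        have hne0b : v 0 ≠ v (st+2*i+1) := hvne _ _ (by omega) hgen (by omega)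
        rw [hbbi, if_pos hgen, Finset.sum_pair hne1]
        have hD := D_pair ℓ hℓ c (v (st+2*i)) (v 0) (v (st+2*i+1)) hne0a hne0b hne1
          (by rw [hsw]; exact hmono _ _ (by omega) (by omega) hgen)
        have e1 : (c s(v (st+2*i), v 0) : ℝ) = (c s(v 0, v (st+2*i)) : ℝ) := by rw [hsw]
        rw [e1, max_sub_zero, max_sub_zero] at hD
        rw [hπj _ (by omega) ha, hπj _ (by omega) hgen]
        linarith
      · have had : st+2*i = d := by omega
        have hbbi : min (st+2*i+1) d = d := min_eq_right (by omega)
        have hne0 : v 0 ≠ v (st+2*i) := hvne 0 _ (by omega) ha (by omega)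
        rw [hbbi, if_neg hgen, ← had]
        rw [show ({v (st+2*i), v (st+2*i)} : Finset V) = {v (st+2*i)} by simp]
        rw [show ({s(v (st+2*i), v 0), s(v 0, v (st+2*i))} : Finset (Sym2 V))
            = {s(v 0, v (st+2*i))} by rw [hsw]; simp]
        rw [Finset.sum_singleton, D_single ℓ hℓ c _ _ hne0, max_sub_zero, max_sub_zero]
        have hb : max ((c s(v 0, v (st+2*i)) : ℝ)) (ℓ (v 0))
            ≤ (c s(v 0, v (st+2*i)) : ℝ) + ℓ (v 0) :=
          max_le (by linarith [hℓ (v 0)]) (by linarith [hCnn (st+2*i)])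
        rw [hπj _ (by omega) ha]
        linarith
    have hinjpe : ∀ a ∈ Finset.range k, ∀ b ∈ Finset.range k,
        peF v st d a = peF v st d b → a = b := by
      have key : ∀ a b, a < k → b < k → a < b → peF v st d a ≠ peF v st d b := by
        intro a b hak hbk hab heq
        have hb := hik b hbk
        have ha := hik a hak
        have h1 : v (st+2*b) ∈ (peF v st d b).1 := Finset.mem_insert_self _ _
        rw [← heq] at h1
        rcases Finset.mem_insert.mp h1 with h | h
        · have := hinj _ _ hb ha h
          omega
        · rw [Finset.mem_singleton] at h
          have := hinj _ _ hb (min_le_right _ _) h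
          omega
      intro a ha b hb heq
      rw [Finset.mem_range] at ha hb
      by_contra hne
      rcases Nat.lt_or_ge a b with h | h
      · exact key a b ha hb h heq
      · exact key b a hb ha (by omega) heq.symm
    have hdisj : Disjoint hed ((Finset.range k).image (peF v st d)) := by
      rw [Finset.disjoint_left]
      intro p hp hp2
      rw [Finset.mem_image] at hp2
      obtain ⟨i, hi, rfl⟩ := hp2
      rw [Finset.mem_range] at hi
      have ha := hik i hi
      rw [hhed] at hp
      have hvU : v 0 ∈ U := by by_contra h; rw [if_neg h] at hp; simp at hp
      rw [if_pos hvU, Finset.mem_singleton] at hp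
      have h1 : v 0 ∈ (peF v st d i).1 := by
        rw [hp]; exact Finset.mem_insert_self _ _
      rcases Finset.mem_insert.mp h1 with h | h
      · have := hinj 0 _ (by omega) ha h
        omega
      · rw [Finset.mem_singleton] at h
        have := hinj 0 _ (by omega) (min_le_right _ _) h
        omega
    rw [Finset.sum_union hdisj, Finset.sum_image hinjpe]
    have hsum1 : ∑ p ∈ hed, ((∑ x ∈ p.1, ℓ x) + ∑ x, max ((pw c p.2 x : ℝ) - ℓ x) 0)
        ≤ (if v 0 ∈ U then π (v 0) + π (v 1) else 0) := by
      rw [hhed]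
      split
      · rw [Finset.sum_singleton]
        exact hheadcost
      · simp
    have hsum2 : ∑ i ∈ Finset.range k,
          ((∑ x ∈ (peF v st d i).1, ℓ x) + ∑ x, max ((pw c (peF v st d i).2 x : ℝ) - ℓ x) 0)
        ≤ ∑ i ∈ Finset.range k, (π (v (st+2*i))
            + (if st+2*i+1 ≤ d then π (v (st+2*i+1)) else 0) + (c s(v 0, v (st+2*i)) : ℝ)) :=
      Finset.sum_le_sum fun i hi => hpecost i (Finset.mem_range.mp hi)
    refine le_trans (add_le_add hsum1 hsum2) ?_
    have harith : ∀ s0 : ℕ, 1 ≤ s0 → ∀ k', s0 + 2*k' ≤ d →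
        ∑ i ∈ Finset.range (k'+1), (π (v (s0+2*i))
            + (if s0+2*i+1 ≤ d then π (v (s0+2*i+1)) else 0) + (c s(v 0, v (s0+2*i)) : ℝ))
        ≤ (c s(v 0, v s0) : ℝ) + ∑ j ∈ Finset.Icc s0 d, π (v j)
            + (1/2) * ∑ j ∈ Finset.Icc (s0+1) d, π (v j) := by
      intro s0 hs0 k' hk'
      have h := arith_aux (fun j => π (v j)) (fun j => (c s(v 0, v j) : ℝ)) s0 d
        (fun j => hPnn _) (fun j hj1 hj2 => hCPj j (le_trans hs0 hj1) hj2)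
        (fun i j h1 h2 h3 => hCm i j (le_trans hs0 h1) h2 h3) k' hk'
      refine le_trans h ?_
      have e1 : ∑ j ∈ Finset.Icc s0 (min (s0+2*k'+1) d), π (v j)
          ≤ ∑ j ∈ Finset.Icc s0 d, π (v j) :=
        Finset.sum_le_sum_of_subset_of_nonneg
          (Finset.Icc_subset_Icc_right (min_le_right _ _)) (fun j _ _ => hPnn _)
      have e2 : ∑ j ∈ Finset.Icc (s0+1) (s0+2*k'), π (v j)
          ≤ ∑ j ∈ Finset.Icc (s0+1) d, π (v j) :=
        Finset.sum_le_sum_of_subset_of_nonneg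
          (Finset.Icc_subset_Icc_right (by omega)) (fun j _ _ => hPnn _)
      linarith
    have hsp0 : ∑ i ∈ Finset.range (d+1), π (v i) = π (v 0) + ∑ j ∈ Finset.Icc 1 d, π (v j) := by
      rw [show Finset.range (d+1) = Finset.Icc 0 d by ext x; simp,
        Icc_bot_split (fun j => π (v j)) 0 d (by omega)]
    have hsp1 : ∑ j ∈ Finset.Icc 1 d, π (v j) = π (v 1) + ∑ j ∈ Finset.Icc 2 d, π (v j) :=
      Icc_bot_split (fun j => π (v j)) 1 d hd
    by_cases hvU : v 0 ∈ U
    · have hstv : st = 2 := by rw [hst, if_pos hvU]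
      rw [if_pos hvU, hstv]
      by_cases hd2 : 2 ≤ d
      · have hkv : k = (d-2)/2 + 1 := by rw [hk, hstv, if_pos hd2]
        rw [hkv]
        have h2 := harith 2 (by omega) ((d-2)/2) (by omega)
        have hsp2 : ∑ j ∈ Finset.Icc 2 d, π (v j)
            = π (v 2) + ∑ j ∈ Finset.Icc 3 d, π (v j) :=
          Icc_bot_split (fun j => π (v j)) 2 d hd2
        have hc21 : (c s(v 0, v 2) : ℝ) ≤ (c s(v 0, v 1) : ℝ) := hCm 1 2 le_rfl (by omega) hd2
        have hc1 : (c s(v 0, v 1) : ℝ) ≤ π (v 1) := hCPj 1 le_rfl hd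
        have hc2 : (c s(v 0, v 2) : ℝ) ≤ π (v 2) := hCPj 2 (by omega) hd2
        have hP0 := hPnn (v 0)
        rw [hsp0, hsp1, hsp2]
        rw [hsp2] at h2
        linarith
      · have hd1 : d = 1 := by omega
        have hkv : k = 0 := by rw [hk, hstv]; rw [if_neg (by omega)]
        rw [hkv]
        rw [Finset.sum_range_zero, hd1]
        rw [show (1:ℕ)+1 = 2 from rfl, Finset.sum_range_succ, Finset.sum_range_one]
        have := hPnn (v 0)
        have := hPnn (v 1)
        linarith
    · have hstv : st = 1 := by rw [hst, if_neg hvU]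
      rw [if_neg hvU, hstv]
      have hkv : k = (d-1)/2 + 1 := by rw [hk, hstv, if_pos hd]
      rw [hkv]
      have h1 := harith 1 le_rfl ((d-1)/2) (by omega)
      have hP0 := hPnn (v 0)
      have hP1 := hPnn (v 1)
      rw [hsp0]
      rw [hsp1] at h1 ⊢
      linarith
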